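/- arXiv:2406.17767 — 6 statements merged into one kernel-verified Lean document; each statement's English description precedes it below -/
import Mathlib

section
/- For every positive integers n and k with k ≤ n, and every u ∈ (0,1), the derivative of g_{n,k}(u) = Σ_{j=n-k+1}^n j·C(n,j)·(1-u)^{j-1}·u^{n-j} equals -(n-k+1)(n-k)·C(n,k-1)·(1-u)^{n-k-1}·u^{k-1}. -/
open Finset

/-- `g n k u = ∑_{j=n-k+1}^n j·C(n,j)·(1-u)^{j-1}·u^{n-j}` -/
noncomputable def g (n k : ℕ) (u : ℝ) : ℝ :=
  ∑ j ∈ Finset.Icc (n - k + 1) n, (j : ℝ) * (n.choose j) * (1 - u) ^ (j - 1) * u ^ (n - j)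

private lemma tele (f : ℕ → ℝ) (a b : ℕ) (h : a ≤ b) :
    ∑ i ∈ Finset.Ico a b, (f (i + 1) - f i) = f b - f a := by
  rw [Finset.sum_Ico_eq_sub _ h, Finset.sum_range_sub, Finset.sum_range_sub]
  ring

theorem stmt0 (n k : ℕ) (hk : 0 < k) (hkn : k ≤ n) (u : ℝ) (hu : u ∈ Set.Ioo (0 : ℝ) 1) :
    HasDerivAt (g n k)
      (-(((n - k + 1 : ℕ) : ℝ) * ((n - k : ℕ) : ℝ) * (n.choose (k - 1)) *
        (1 - u) ^ (n - k - 1) * u ^ (k - 1))) u := by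
  set f : ℕ → ℝ := fun j =>
    (j : ℝ) * ((j - 1 : ℕ) : ℝ) * (n.choose j) * (1 - u) ^ (j - 2) * u ^ (n - j) with hf
  have key : ∀ j ∈ Finset.Icc (n - k + 1) n,
      HasDerivAt (fun u : ℝ => (j : ℝ) * (n.choose j) * (1 - u) ^ (j - 1) * u ^ (n - j))
        (f (j + 1) - f j) u := by
    intro j hj
    have h1 : HasDerivAt (fun u : ℝ => (1 - u) ^ (j - 1))
        (-(((j - 1 : ℕ) : ℝ) * (1 - u) ^ (j - 1 - 1))) u := by
      have := ((hasDerivAt_pow (j - 1) (1 - u)).comp u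
        ((hasDerivAt_id u).const_sub 1))
      simpa [mul_comm, Function.comp_def] using this
    have h2 : HasDerivAt (fun u : ℝ => u ^ (n - j))
        (((n - j : ℕ) : ℝ) * u ^ (n - j - 1)) u := hasDerivAt_pow (n - j) u
    have hprod := (h1.mul h2).const_mul ((j : ℝ) * (n.choose j))
    convert hprod using 1
    · rfl
    · rfl
    · ext v; simp only [Pi.mul_apply]; ring
    · -- arithmetic identity
      have hid := Nat.choose_succ_right_eq n j
      simp only [hf]
      have e1 : j + 1 - 2 = j - 1 := by omega
      have e2 : n - (j + 1) = n - j - 1 := by omega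
      have e3 : j + 1 - 1 = j := by omega
      rw [e1, e2, e3, show j - 1 - 1 = j - 2 by omega]
      have hcast : (n.choose (j + 1) : ℝ) * ((j : ℝ) + 1) = (n.choose j : ℝ) * ((n - j : ℕ) : ℝ) := by
        exact_mod_cast congrArg (Nat.cast : ℕ → ℝ) hid
      push_cast
      linear_combination ((j : ℝ) * (1 - u) ^ (j - 1) * u ^ (n - j - 1)) * hcast
  have hsum := HasDerivAt.sum key
  have heq : ∑ j ∈ Finset.Icc (n - k + 1) n, (f (j + 1) - f j)
      = -(((n - k + 1 : ℕ) : ℝ) * ((n - k : ℕ) : ℝ) * (n.choose (k - 1)) *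
        (1 - u) ^ (n - k - 1) * u ^ (k - 1)) := by
    have hab : n - k + 1 ≤ n + 1 := by omega
    rw [← Finset.Ico_add_one_right_eq_Icc, tele f _ _ hab]
    have hfn : f (n + 1) = 0 := by
      simp [hf, Nat.choose_succ_self]
    have hfa : f (n - k + 1) = ((n - k + 1 : ℕ) : ℝ) * ((n - k : ℕ) : ℝ) * (n.choose (k - 1)) *
        (1 - u) ^ (n - k - 1) * u ^ (k - 1) := by
      have e1 : n - k + 1 - 1 = n - k := by omega
      have e2 : n - k + 1 - 2 = n - k - 1 := by omega
      have e3 : n - (n - k + 1) = k - 1 := by omega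
      have e4 : n.choose (n - k + 1) = n.choose (k - 1) := by
        have : n - (k - 1) = n - k + 1 := by omega
        rw [← this, Nat.choose_symm (by omega)]
      simp only [hf, e1, e2, e3, e4]
    rw [hfn, hfa]; ring
  rw [← heq]
  convert hsum using 1
  · rfl
  · rfl
  · ext v; simp [g, Finset.sum_apply]
end

section
/- Let k ≥ 1 be an integer, θ_k ∈ (0, 1/k), and let y_k: [0,1) → (0,1] be a differentiable function with y_k(0) = 1, lim_{t→1⁻} y_k(t) = 0, satisfying (Γ_k(-ln y_k))'(t) = k!(1 - 1/(kθ_k)) - Γ_{k+1}(-ln y_k(t)) for all t ∈ (0,1). Then for every t ∈ (0,1), (Γ_k(-ln y_k))'(t) · exp(∫_t^1 ln y_k(s) ds) = k!(1 - 1/(kθ_k)). -/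
open Set Filter MeasureTheory intervalIntegral Real


/-- The upper incomplete gamma function `Γ_r(x) = ∫_x^∞ t^{r-1} e^{-t} dt`. -/
noncomputable def uGamma (r : ℕ) (x : ℝ) : ℝ := ∫ t in Set.Ioi x, t ^ (r - 1) * Real.exp (-t)

lemma aux_int (n : ℕ) (c : ℝ) :
    IntegrableOn (fun t : ℝ => t ^ n * Real.exp (-t)) (Set.Ioi c) := by
  refine integrable_of_isBigO_exp_neg one_half_pos
    ((continuous_pow n).mul (Real.continuous_exp.comp continuous_neg)).continuousOn ?_
  refine ((Real.Gamma_integrand_isLittleO (n : ℝ)).isBigO).congr' ?_ EventuallyEq.rfl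
  filter_upwards [eventually_gt_atTop (0:ℝ)] with x hx
  rw [Real.rpow_natCast]; ring

lemma uGamma_split (r : ℕ) {c z : ℝ} (hcz : c ≤ z) :
    uGamma r z = (∫ u in Set.Ioi c, u ^ (r-1) * Real.exp (-u))
      - ∫ u in c..z, u ^ (r-1) * Real.exp (-u) := by
  rw [intervalIntegral.integral_of_le hcz, ← Set.Ioc_union_Ioi_eq_Ioi hcz,
    MeasureTheory.setIntegral_union Set.Ioc_disjoint_Ioi_same measurableSet_Ioi
      ((aux_int (r-1) c).mono_set Set.Ioc_subset_Ioi_self) (aux_int (r-1) z)]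
  unfold uGamma; ring

lemma uGamma_hasDerivAt (r : ℕ) (x : ℝ) :
    HasDerivAt (uGamma r) (-(x ^ (r-1) * Real.exp (-x))) x := by
  set f : ℝ → ℝ := fun t => t ^ (r-1) * Real.exp (-t) with hf
  have hcont : Continuous f := (continuous_pow _).mul (Real.continuous_exp.comp continuous_neg)
  have hii : IntervalIntegrable f volume (x-1) x :=
    (intervalIntegrable_iff_integrableOn_Ioc_of_le (by linarith)).mpr
      ((aux_int (r-1) (x-1)).mono_set Set.Ioc_subset_Ioi_self)
  have hΦ : HasDerivAt (fun z => ∫ u in (x-1)..z, f u) (f x) x :=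
    intervalIntegral.integral_hasDerivAt_right hii
      (hcont.stronglyMeasurable.stronglyMeasurableAtFilter) hcont.continuousAt
  have heq : (fun z => (∫ u in Set.Ioi (x-1), f u) - ∫ u in (x-1)..z, f u) =ᶠ[nhds x] uGamma r := by
    filter_upwards [Ioi_mem_nhds (show x - 1 < x by linarith)] with z hz
    exact (uGamma_split r (le_of_lt hz)).symm
  have := (hasDerivAt_const x (∫ u in Set.Ioi (x-1), f u)).sub hΦ
  rw [zero_sub] at this
  exact this.congr_of_eventuallyEq heq.symm

lemma uGamma_tendsto_zero (r : ℕ) : Tendsto (uGamma r) atTop (nhds 0) := by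
  set f : ℝ → ℝ := fun t => t ^ (r-1) * Real.exp (-t) with hf
  have h1 : Tendsto (fun x => ∫ u in (0:ℝ)..x, f u) atTop (nhds (∫ u in Set.Ioi 0, f u)) :=
    MeasureTheory.intervalIntegral_tendsto_integral_Ioi 0 (aux_int (r-1) 0) tendsto_id
  have h2 := (tendsto_const_nhds (x := ∫ u in Set.Ioi 0, f u) (f := atTop)).sub h1
  rw [sub_self] at h2
  refine h2.congr' ?_
  filter_upwards [eventually_ge_atTop (0:ℝ)] with z hz
  exact (uGamma_split r hz).symm

/-- If `y_k` solves `(Γ_k(-ln y_k))' = k!(1 - 1/(kθ_k)) - Γ_{k+1}(-ln y_k)` on `(0,1)` with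
`y_k(0) = 1` and `y_k(t) → 0` as `t → 1⁻`, then for every `t ∈ (0,1)`,
`(Γ_k(-ln y_k))'(t)·exp(∫_t^1 ln y_k(s) ds) = k!(1 - 1/(kθ_k))`. -/
theorem stmt9 (k : ℕ) (hk : 1 ≤ k) (θ : ℝ) (hθ : θ ∈ Set.Ioo (0 : ℝ) (1 / k))
    (y : ℝ → ℝ)
    (hyval : ∀ t ∈ Set.Ico (0 : ℝ) 1, y t ∈ Set.Ioc (0 : ℝ) 1)
    (hydiff : ∀ t ∈ Set.Ico (0 : ℝ) 1, DifferentiableAt ℝ y t)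
    (hy0 : y 0 = 1)
    (hy1 : Filter.Tendsto y (nhdsWithin 1 (Set.Iio 1)) (nhds 0))
    (hint : ∀ t ∈ Set.Ioo (0 : ℝ) 1,
      IntervalIntegrable (fun s => Real.log (y s)) MeasureTheory.volume t 1)
    (hode : ∀ t ∈ Set.Ioo (0 : ℝ) 1,
      deriv (fun s => uGamma k (-Real.log (y s))) t
        = (Nat.factorial k : ℝ) * (1 - 1 / (k * θ)) - uGamma (k + 1) (-Real.log (y t)))
    (t : ℝ) (ht : t ∈ Set.Ioo (0 : ℝ) 1) :
    deriv (fun s => uGamma k (-Real.log (y s))) t * Real.exp (∫ s in t..1, Real.log (y s))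
      = (Nat.factorial k : ℝ) * (1 - 1 / (k * θ)) := by
  set C : ℝ := (Nat.factorial k : ℝ) * (1 - 1 / (k * θ)) with hC
  set A : ℝ → ℝ := deriv (fun s => uGamma k (-Real.log (y s))) with hA
  set F : ℝ → ℝ := fun s => A s * Real.exp (∫ r in s..1, Real.log (y r)) with hF
  -- F has derivative zero on (0,1)
  have key : ∀ u ∈ Set.Ioo (0:ℝ) 1, HasDerivAt F 0 u := by
    intro u hu
    have huI : u ∈ Set.Ico (0:ℝ) 1 := ⟨hu.1.le, hu.2⟩
    have hyu : y u ∈ Set.Ioc (0:ℝ) 1 := hyval u huI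
    have hyd : DifferentiableAt ℝ y u := hydiff u huI
    set xu : ℝ := -Real.log (y u) with hxu
    set xd : ℝ := -(deriv y u / y u) with hxd
    have hX : HasDerivAt (fun s => -Real.log (y s)) xd u :=
      (hyd.hasDerivAt.log hyu.1.ne').neg
    have hg : HasDerivAt (fun s => uGamma k (-Real.log (y s)))
        (-(xu ^ (k-1) * Real.exp (-xu)) * xd) u := by
      have := (uGamma_hasDerivAt k xu).comp u hX
      exact this
    have hAu : A u = -(xu ^ (k-1) * Real.exp (-xu)) * xd := hg.deriv
    -- derivative of A via the ODE
    have hRHS : HasDerivAt (fun s => C - uGamma (k+1) (-Real.log (y s)))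
        (-(-(xu ^ k * Real.exp (-xu)) * xd)) u := by
      have := ((hasDerivAt_const u C).sub (((uGamma_hasDerivAt (k+1) xu).comp u hX)))
      rw [zero_sub] at this
      exact this
    have hAeq : A =ᶠ[nhds u] (fun s => C - uGamma (k+1) (-Real.log (y s))) := by
      filter_upwards [isOpen_Ioo.mem_nhds hu] with s hs
      exact hode s hs
    have hA' : HasDerivAt A (-(-(xu ^ k * Real.exp (-xu)) * xd)) u :=
      hRHS.congr_of_eventuallyEq hAeq
    -- derivative of the integral term
    have hii : IntervalIntegrable (fun s => Real.log (y s)) volume 1 u := (hint u hu).symm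
    have hclog : ContinuousAt (fun s => Real.log (y s)) u :=
      (Real.continuousAt_log hyu.1.ne').comp hyd.continuousAt
    have hclogOn : ∀ v ∈ Set.Ioo (0:ℝ) 1, ContinuousAt (fun s => Real.log (y s)) v := by
      intro v hv
      exact (Real.continuousAt_log (hyval v ⟨hv.1.le, hv.2⟩).1.ne').comp
        (hydiff v ⟨hv.1.le, hv.2⟩).continuousAt
    have hBr : HasDerivAt (fun s => ∫ r in (1:ℝ)..s, Real.log (y r)) (Real.log (y u)) u :=
      intervalIntegral.integral_hasDerivAt_right hii
        (ContinuousAt.stronglyMeasurableAtFilter isOpen_Ioo hclogOn u hu)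
        hclog
    have hB : HasDerivAt (fun s => ∫ r in s..1, Real.log (y r)) (-Real.log (y u)) u := by
      have := hBr.neg
      refine this.congr_of_eventuallyEq (Eventually.of_forall fun s => ?_)
      exact intervalIntegral.integral_symm 1 s
    have hE : HasDerivAt (fun s => Real.exp (∫ r in s..1, Real.log (y r)))
        (Real.exp (∫ r in u..1, Real.log (y r)) * (-Real.log (y u))) u := hB.exp
    have hprod := hA'.mul hE
    have hpow : xu ^ (k-1) * xu = xu ^ k := by
      rw [← pow_succ, Nat.sub_add_cancel hk]
    have hzero : -(-(xu ^ k * Real.exp (-xu)) * xd) * Real.exp (∫ r in u..1, Real.log (y r))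
        + A u * (Real.exp (∫ r in u..1, Real.log (y r)) * (-Real.log (y u))) = 0 := by
      rw [hAu, show -Real.log (y u) = xu from rfl, ← hpow]; ring
    rw [hzero] at hprod
    exact hprod
  -- F is constant on (t,1)
  have hconst : ∀ s ∈ Set.Ioo t 1, F s = F t := by
    intro s hs
    have hsub : Set.Icc t s ⊆ Set.Ioo (0:ℝ) 1 := fun v hv => ⟨lt_of_lt_of_le ht.1 hv.1,
      lt_of_le_of_lt hv.2 hs.2⟩
    have := constant_of_has_deriv_right_zero
      (f := F) (a := t) (b := s)
      (fun v hv => ((key v (hsub hv)).continuousAt.continuousWithinAt))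
      (fun v hv => ((key v (hsub ⟨hv.1, hv.2.le⟩)).hasDerivWithinAt))
    exact this s ⟨hs.1.le, le_refl s⟩
  -- limits as s → 1⁻
  have hmem1 : (1:ℝ) ∈ Set.Ioc (0:ℝ) 1 := ⟨one_pos, le_refl _⟩
  have hev01 : Set.Ioo (0:ℝ) 1 ∈ nhdsWithin (1:ℝ) (Set.Iio 1) := Ioo_mem_nhdsLT hmem1.1
  -- tendsto of -log y to atTop
  have hypos : Tendsto y (nhdsWithin 1 (Set.Iio 1)) (nhdsWithin 0 (Set.Ioi 0)) := by
    rw [tendsto_nhdsWithin_iff]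
    refine ⟨hy1, ?_⟩
    filter_upwards [hev01] with s hs
    exact (hyval s ⟨hs.1.le, hs.2⟩).1
  have hXtop : Tendsto (fun s => -Real.log (y s)) (nhdsWithin 1 (Set.Iio 1)) atTop :=
    tendsto_neg_atBot_atTop.comp (Real.tendsto_log_nhdsGT_zero.comp hypos)
  have hU : Tendsto (fun s => uGamma (k+1) (-Real.log (y s)))
      (nhdsWithin 1 (Set.Iio 1)) (nhds 0) := (uGamma_tendsto_zero (k+1)).comp hXtop
  -- tendsto of the integral to 0
  have hint1 : IntegrableOn (fun s => Real.log (y s)) (Set.uIcc t 1) volume := by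
    rw [Set.uIcc_of_le ht.2.le, integrableOn_Icc_iff_integrableOn_Ioc]
    exact (intervalIntegrable_iff_integrableOn_Ioc_of_le ht.2.le).mp (hint t ht)
  have hPcont : ContinuousOn (fun s => ∫ r in s..1, Real.log (y r)) (Set.uIcc t 1) :=
    intervalIntegral.continuousOn_primitive_interval_left hint1
  have hPtend : Tendsto (fun s => ∫ r in s..1, Real.log (y r)) (nhdsWithin 1 (Set.Iio 1))
      (nhds 0) := by
    have h1 : (1:ℝ) ∈ Set.uIcc t 1 := Set.right_mem_uIcc
    have := (hPcont 1 h1).tendsto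
    rw [intervalIntegral.integral_same] at this
    refine this.mono_left ?_
    rw [← nhdsWithin_Ioo_eq_nhdsLT ht.2]
    refine nhdsWithin_mono 1 ?_
    rw [Set.uIcc_of_le ht.2.le]
    exact Set.Ioo_subset_Icc_self
  -- combine: F tends to C
  have hFlim : Tendsto F (nhdsWithin 1 (Set.Iio 1)) (nhds C) := by
    have h1 : Tendsto (fun s => (C - uGamma (k+1) (-Real.log (y s)))
        * Real.exp (∫ r in s..1, Real.log (y r))) (nhdsWithin 1 (Set.Iio 1))
        (nhds ((C - 0) * Real.exp 0)) :=
      (tendsto_const_nhds.sub hU).mul (Real.continuous_exp.continuousAt.tendsto.comp hPtend)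
    rw [sub_zero, Real.exp_zero, mul_one] at h1
    refine h1.congr' ?_
    filter_upwards [hev01] with s hs
    show _ = A s * _
    rw [hode s hs]
  -- F is eventually constant F t, so F t = C
  have hFconst : Tendsto F (nhdsWithin 1 (Set.Iio 1)) (nhds (F t)) := by
    have : F =ᶠ[nhdsWithin 1 (Set.Iio 1)] (fun _ => F t) := by
      filter_upwards [Ioo_mem_nhdsLT ht.2]
        with s hs
      exact hconst s hs
    exact Tendsto.congr' this.symm tendsto_const_nhds
  exact tendsto_nhds_unique hFconst hFlim
end

section
/- Let k ≥ 1 and let θ_k and y_k satisfy the differential equation (Γ_k(-ln y_k))' = k!(1 - 1/(kθ_k)) - Γ_{k+1}(-ln y_k) on (0,1) with boundary conditions y_k(0) = 1 and lim_{t→1⁻} y_k(t) = 0, where y_k: [0,1) → (0,1] is differentiable. Then necessarily θ_k < 1/k and y_k is strictly decreasing on [0,1). -/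
open Set MeasureTheory Filter Real

section aux

noncomputable def iGam (n : ℕ) (x : ℝ) : ℝ := ∫ t in Set.Ioi x, t ^ n * Real.exp (-t)

lemma iGam_integrableOn (n : ℕ) (x : ℝ) :
    IntegrableOn (fun t : ℝ => t ^ n * Real.exp (-t)) (Ioi x) := by
  have h0 : IntegrableOn (fun t : ℝ => t ^ n * Real.exp (-t)) (Ioi 0) := by
    have h := Real.GammaIntegral_convergent (s := (n : ℝ) + 1) (by positivity)
    refine (h.congr_fun ?_ measurableSet_Ioi)
    intro t ht
    simp only [add_sub_cancel_right, Real.rpow_natCast, mul_comm]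
  rcases le_or_gt 0 x with hx | hx
  · exact h0.mono_set (Ioi_subset_Ioi hx)
  · rw [← Ioc_union_Ioi_eq_Ioi hx.le, integrableOn_union]
    exact ⟨Continuous.integrableOn_Ioc (by continuity), h0⟩

lemma iGam_split (n : ℕ) {a b : ℝ} (hab : a ≤ b) :
    iGam n a = (∫ t in Ioc a b, t ^ n * Real.exp (-t)) + iGam n b := by
  rw [iGam, ← Ioc_union_Ioi_eq_Ioi hab,
    MeasureTheory.setIntegral_union (Ioc_disjoint_Ioi le_rfl) measurableSet_Ioi
      ((iGam_integrableOn n a).mono_set Ioc_subset_Ioi_self) (iGam_integrableOn n b)]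
  rfl

lemma iGam_eq (n : ℕ) (x : ℝ) :
    iGam n x = iGam n 0 - ∫ t in (0:ℝ)..x, t ^ n * Real.exp (-t) := by
  rcases le_or_gt 0 x with hx | hx
  · rw [intervalIntegral.integral_of_le hx, iGam_split n hx]
    ring
  · rw [intervalIntegral.integral_symm, intervalIntegral.integral_of_le hx.le,
      iGam_split n hx.le]
    ring

lemma iGam_hasDerivAt (n : ℕ) (x : ℝ) :
    HasDerivAt (iGam n) (-(x ^ n * Real.exp (-x))) x := by
  have hc : Continuous (fun t : ℝ => t ^ n * Real.exp (-t)) := by continuity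
  have h : HasDerivAt (fun u : ℝ => ∫ t in (0:ℝ)..u, t ^ n * Real.exp (-t))
      (x ^ n * Real.exp (-x)) x := by
    exact intervalIntegral.integral_hasDerivAt_right (hc.intervalIntegrable 0 x)
      (hc.stronglyMeasurableAtFilter _ _) hc.continuousAt
  have := (h.const_sub (iGam n 0))
  refine this.congr_of_eventuallyEq ?_ |>.congr_deriv (by ring)
  filter_upwards with u using (iGam_eq n u)

lemma iGam_zero (n : ℕ) : iGam n 0 = n.factorial := by
  rw [← Real.Gamma_nat_eq_factorial, Real.Gamma_eq_integral (by positivity), iGam]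
  refine setIntegral_congr_fun measurableSet_Ioi fun t ht => ?_
  simp only [add_sub_cancel_right, Real.rpow_natCast, mul_comm]

lemma iGam_tendsto (n : ℕ) : Tendsto (iGam n) atTop (nhds 0) := by
  have h := MeasureTheory.intervalIntegral_tendsto_integral_Ioi 0
    (iGam_integrableOn n 0) tendsto_id
  have : Tendsto (fun x : ℝ => iGam n 0 - ∫ t in (0:ℝ)..x, t ^ n * Real.exp (-t))
      atTop (nhds (iGam n 0 - iGam n 0)) := (tendsto_const_nhds.sub h)
  simpa using this.congr fun x => (iGam_eq n x).symm

lemma iGam_pos (n : ℕ) {x : ℝ} (hx : 0 ≤ x) : 0 < iGam n x := by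
  have h1 : (0:ℝ) < ∫ t in Ioc x (x+1), t ^ n * Real.exp (-t) := by
    rw [← intervalIntegral.integral_of_le (by linarith)]
    refine intervalIntegral.intervalIntegral_pos_of_pos_on
      ((Continuous.intervalIntegrable (by continuity)) _ _) (fun t ht => ?_) (by linarith)
    have : 0 < t := lt_of_le_of_lt hx ht.1
    positivity
  have h2 : (0:ℝ) ≤ iGam n (x+1) := by
    refine setIntegral_nonneg measurableSet_Ioi fun t ht => ?_
    have : (0:ℝ) < t := by have := ht.out; linarith
    positivity
  rw [iGam_split n (show x ≤ x + 1 by linarith)]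
  linarith

lemma iGam_strictAnti (n : ℕ) : StrictAntiOn (iGam n) (Ici 0) := by
  refine strictAntiOn_of_deriv_neg (convex_Ici 0)
    (fun t _ => (iGam_hasDerivAt n t).continuousAt.continuousWithinAt) fun t ht => ?_
  rw [interior_Ici] at ht
  rw [(iGam_hasDerivAt n t).deriv]
  have ht0 : (0:ℝ) < t := ht
  have he := Real.exp_pos (-t)
  have hp : (0:ℝ) < t ^ n := pow_pos ht0 n
  nlinarith

lemma hasDerivAt_monomial (n : ℕ) (z : ℝ) :
    HasDerivAt (fun t : ℝ => t ^ n * Real.exp (-t))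
      ((n * z ^ (n-1) - z ^ n) * Real.exp (-z)) z := by
  have h2 : HasDerivAt (fun t : ℝ => Real.exp (-t)) (-Real.exp (-z)) z := by
    simpa using (hasDerivAt_neg' z).exp
  have := (hasDerivAt_pow n z).mul h2
  exact this.congr_deriv (by ring)

lemma iGam_le (n : ℕ) {x : ℝ} (hx : 2 * (n:ℝ) ≤ x) :
    iGam n x ≤ 2 * (x ^ n * Real.exp (-x)) := by
  set h : ℝ → ℝ := fun z => iGam n z - 2 * (z ^ n * Real.exp (-z)) with hh
  have hd : ∀ z : ℝ, HasDerivAt h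
      (-(z ^ n * Real.exp (-z)) - 2 * ((n * z ^ (n-1) - z ^ n) * Real.exp (-z))) z :=
    fun z => (iGam_hasDerivAt n z).sub ((hasDerivAt_monomial n z).const_mul 2)
  have hmono : MonotoneOn h (Ici (2 * (n:ℝ))) := by
    refine monotoneOn_of_deriv_nonneg (convex_Ici _)
      (fun z _ => (hd z).continuousAt.continuousWithinAt)
      (fun z _ => (hd z).differentiableAt.differentiableWithinAt) (fun z hz => ?_)
    rw [interior_Ici] at hz
    rw [(hd z).deriv]
    have hz0 : 0 < z := lt_of_le_of_lt (by positivity) hz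
    have he := Real.exp_pos (-z)
    have key : (n:ℝ) * z ^ (n-1) * 2 ≤ z ^ n := by
      cases n with
      | zero => simp
      | succ m =>
        have hzm : 0 ≤ z ^ m := le_of_lt (pow_pos hz0 m)
        have : z ^ (m+1) = z ^ m * z := pow_succ z m
        have hz2 : 2 * ((m:ℝ)+1) ≤ z := by
          push_cast at hz ⊢; linarith [(mem_Ioi.1 hz).le]
        simp only [Nat.add_sub_cancel, this]
        push_cast
        nlinarith
    nlinarith
  have htend : Tendsto h atTop (nhds 0) := by
    have h2 : Tendsto (fun z : ℝ => 2 * (z ^ n * Real.exp (-z))) atTop (nhds (2 * 0)) :=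
      (Real.tendsto_pow_mul_exp_neg_atTop_nhds_zero n).const_mul 2
    simpa using (iGam_tendsto n).sub h2
  have hle : h x ≤ 0 := by
    refine ge_of_tendsto htend ?_
    filter_upwards [eventually_ge_atTop x] with z hz
    exact hmono (mem_Ici.2 hx) (mem_Ici.2 (hx.trans hz)) hz
  simpa [hh] using hle

end aux

/-- If `θ_k > 0` and `y_k` satisfy the differential equation
`(Γ_k(-ln y_k))' = k!(1 - 1/(kθ_k)) - Γ_{k+1}(-ln y_k)` on `(0,1)` with `y_k(0) = 1` and
`y_k(t) → 0` as `t → 1⁻`, then necessarily `θ_k < 1/k` and `y_k` is strictly decreasing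
on `[0,1)`. -/
theorem stmt10 (k : ℕ) (hk : 1 ≤ k) (θ : ℝ) (hθ : 0 < θ)
    (y : ℝ → ℝ)
    (hyval : ∀ t ∈ Set.Ico (0 : ℝ) 1, y t ∈ Set.Ioc (0 : ℝ) 1)
    (hydiff : ∀ t ∈ Set.Ico (0 : ℝ) 1, DifferentiableAt ℝ y t)
    (hy0 : y 0 = 1)
    (hy1 : Filter.Tendsto y (nhdsWithin 1 (Set.Iio 1)) (nhds 0))
    (hode : ∀ t ∈ Set.Ioo (0 : ℝ) 1,
      deriv (fun s => uGamma k (-Real.log (y s))) t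
        = (Nat.factorial k : ℝ) * (1 - 1 / (k * θ)) - uGamma (k + 1) (-Real.log (y t))) :
    θ < 1 / k ∧ StrictAntiOn y (Set.Ico 0 1) := by
  obtain ⟨n, rfl⟩ : ∃ n, k = n + 1 := ⟨k - 1, (Nat.succ_pred_eq_of_pos hk).symm⟩
  set x : ℝ → ℝ := fun t => -Real.log (y t) with hxdef
  set c : ℝ := ((n+1).factorial : ℝ) * (1 - 1 / ((n+1 : ℕ) * θ)) with hcdef
  have hfacpos : (0:ℝ) < ((n+1).factorial : ℝ) := by positivity
  have hKpos : (0:ℝ) < ((n:ℝ) + 1) := by positivity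
  have hypos : ∀ t ∈ Set.Ico (0:ℝ) 1, 0 < y t := fun t ht => (hyval t ht).1
  have hyle : ∀ t ∈ Set.Ico (0:ℝ) 1, y t ≤ 1 := fun t ht => (hyval t ht).2
  have hx_nonneg : ∀ t ∈ Set.Ico (0:ℝ) 1, 0 ≤ x t := fun t ht => by
    simp only [hxdef, neg_nonneg]
    exact Real.log_nonpos (hypos t ht).le (hyle t ht)
  have hx0 : x 0 = 0 := by simp [hxdef, hy0]
  have hxD : ∀ t ∈ Set.Ico (0:ℝ) 1, HasDerivAt x (-((y t)⁻¹ * deriv y t)) t := by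
    intro t ht
    exact (((Real.hasDerivAt_log (ne_of_gt (hypos t ht))).comp t
      (hydiff t ht).hasDerivAt)).neg
  set F : ℝ → ℝ := fun s => iGam n (x s) with hFdef
  have hFD : ∀ t ∈ Set.Ico (0:ℝ) 1,
      HasDerivAt F (-(x t ^ n * Real.exp (-(x t))) * (-((y t)⁻¹ * deriv y t))) t := by
    intro t ht
    exact (iGam_hasDerivAt n (x t)).comp t (hxD t ht)
  have hFcont : ContinuousOn F (Set.Ico 0 1) :=
    fun t ht => ((hFD t ht).continuousAt).continuousWithinAt
  have hFode : ∀ t ∈ Set.Ioo (0:ℝ) 1, deriv F t = c - iGam (n+1) (x t) := by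
    intro t ht
    have h := hode t ht
    simpa [uGamma, iGam, hFdef, hxdef, hcdef] using h
  -- x tends to infinity at 1⁻
  have hIoo : Set.Ioo (0:ℝ) 1 ∈ nhdsWithin 1 (Set.Iio 1) :=
    Ioo_mem_nhdsLT zero_lt_one
  have hxtop : Tendsto x (nhdsWithin 1 (Set.Iio 1)) atTop := by
    have h1 : Tendsto y (nhdsWithin 1 (Set.Iio 1)) (nhdsWithin 0 (Set.Ioi 0)) := by
      refine tendsto_nhdsWithin_of_tendsto_nhds_of_eventually_within _ hy1 ?_
      filter_upwards [hIoo] with t ht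
      exact hypos t (Set.mem_Ico.2 ⟨ht.1.le, ht.2⟩)
    have h2 : Tendsto (fun t => Real.log (y t)) (nhdsWithin 1 (Set.Iio 1)) atBot :=
      Real.tendsto_log_nhdsGT_zero.comp h1
    simpa [hxdef, Function.comp_def] using tendsto_neg_atBot_atTop.comp h2
  have hFtend : Tendsto F (nhdsWithin 1 (Set.Iio 1)) (nhds 0) := (iGam_tendsto n).comp hxtop
  have hF0 : F 0 = (n.factorial : ℝ) := by rw [hFdef]; simp only [hx0]; exact iGam_zero n
  -- helper: from negative deriv of F, x is strictly increasing
  have hxmono : (∀ t ∈ Set.Ioo (0:ℝ) 1, deriv F t < 0) → StrictMonoOn x (Set.Ico 0 1) := by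
    intro hneg
    have hFanti : StrictAntiOn F (Set.Ico 0 1) := by
      refine strictAntiOn_of_deriv_neg (convex_Ico 0 1) hFcont ?_
      rw [interior_Ico]; exact hneg
    intro s hs t ht hst
    have hFst : F t < F s := hFanti hs ht hst
    by_contra hle
    push_neg at hle
    rcases eq_or_lt_of_le hle with he | hlt
    · rw [hFdef] at hFst; simp only [he] at hFst; exact lt_irrefl _ hFst
    · have := iGam_strictAnti n (hx_nonneg t ht) (hx_nonneg s hs) hlt
      rw [hFdef] at hFst; simp only at hFst
      exact absurd this (by linarith)
  have hc_lt_fac : c < ((n+1).factorial : ℝ) := by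
    rw [hcdef]
    have h1 : 0 < 1 / (((n:ℕ)+1 : ℝ) * θ) := by positivity
    push_cast at h1 ⊢
    nlinarith
  have hcneg : c < 0 := by
    by_contra hc0
    push_neg at hc0
    rcases eq_or_lt_of_le hc0 with hceq | hcpos
    · -- c = 0
      have hneg : ∀ t ∈ Set.Ioo (0:ℝ) 1, deriv F t < 0 := by
        intro t ht
        rw [hFode t ht, ← hceq]
        have := iGam_pos (n+1) (hx_nonneg t ⟨ht.1.le, ht.2⟩)
        linarith
      have hxm := hxmono hneg
      have hBpos : (0:ℝ) < 2 * ((n:ℝ) + 1) := by positivity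
      obtain ⟨t0, ht0B, ht0mem⟩ := ((hxtop.eventually_ge_atTop (2 * ((n:ℝ) + 1))).and
        (eventually_mem_set.2 hIoo)).exists
      have ht0Ico : t0 ∈ Set.Ico (0:ℝ) 1 := ⟨ht0mem.1.le, ht0mem.2⟩
      have hxt0pos : 0 < x t0 := lt_of_lt_of_le hBpos ht0B
      have hxge : ∀ t ∈ Set.Ico t0 1, 2 * ((n:ℝ) + 1) ≤ x t ∧ 0 < x t := by
        intro t ht
        rcases eq_or_lt_of_le ht.1 with heq | hlt
        · rw [← heq]; exact ⟨ht0B, hxt0pos⟩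
        · have h2 : x t0 < x t := hxm ht0Ico ⟨ht0Ico.1.trans ht.1, ht.2⟩ hlt
          exact ⟨ht0B.trans h2.le, hxt0pos.trans h2⟩
      have hxd : ∀ t ∈ Set.Ioo t0 1, -((y t)⁻¹ * deriv y t) ≤ 2 * x t := by
        intro t ht
        have htI : t ∈ Set.Ioo (0:ℝ) 1 := ⟨ht0mem.1.trans ht.1, ht.2⟩
        have htIco : t ∈ Set.Ico (0:ℝ) 1 := ⟨htI.1.le, htI.2⟩
        have hxt := hxge t ⟨ht.1.le, ht.2⟩
        have heq : -(x t ^ n * Real.exp (-(x t))) * (-((y t)⁻¹ * deriv y t))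
            = c - iGam (n+1) (x t) := by
          rw [← (hFD t htIco).deriv]; exact hFode t htI
        rw [← hceq, zero_sub] at heq
        have hA : 0 < x t ^ n * Real.exp (-(x t)) := by
          have := Real.exp_pos (-(x t)); have := pow_pos hxt.2 n; positivity
        have hbound : iGam (n+1) (x t) ≤ 2 * (x t ^ (n+1) * Real.exp (-(x t))) :=
          iGam_le (n+1) (by push_cast; linarith [hxt.1])
        have heq2 : (x t ^ n * Real.exp (-(x t))) * (-((y t)⁻¹ * deriv y t))
            = iGam (n+1) (x t) := by linear_combination -heq
        by_contra hgt; push_neg at hgt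
        have h3 := mul_lt_mul_of_pos_left hgt hA
        rw [heq2] at h3
        rw [pow_succ] at hbound
        nlinarith
      set L : ℝ → ℝ := fun t => Real.log (x t) - 2 * t with hLdef
      have hLD : ∀ t ∈ Set.Ico t0 1,
          HasDerivAt L ((x t)⁻¹ * (-((y t)⁻¹ * deriv y t)) - 2) t := by
        intro t ht
        have hxt := (hxge t ht).2
        have h1 : HasDerivAt (fun s => Real.log (x s))
            ((x t)⁻¹ * (-((y t)⁻¹ * deriv y t))) t :=
          (Real.hasDerivAt_log hxt.ne').comp t (hxD t ⟨ht0Ico.1.trans ht.1, ht.2⟩)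
        have h2 := h1.sub ((hasDerivAt_id t).const_mul 2)
        exact h2.congr_deriv (by ring)
      have hLanti : AntitoneOn L (Set.Ico t0 1) := by
        refine antitoneOn_of_deriv_nonpos (convex_Ico _ _)
          (fun t ht => (hLD t ht).continuousAt.continuousWithinAt)
          (fun t ht => by
            rw [interior_Ico] at ht
            exact (hLD t ⟨ht.1.le, ht.2⟩).differentiableAt.differentiableWithinAt)
          (fun t ht => ?_)
        rw [interior_Ico] at ht
        rw [(hLD t ⟨ht.1.le, ht.2⟩).deriv]
        have hxt := (hxge t ⟨ht.1.le, ht.2⟩).2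
        have hd := hxd t ht
        have h5 : (x t)⁻¹ * (-((y t)⁻¹ * deriv y t)) ≤ (x t)⁻¹ * (2 * x t) :=
          mul_le_mul_of_nonneg_left hd (inv_nonneg.2 hxt.le)
        have h6 : (x t)⁻¹ * (2 * x t) = 2 := by field_simp
        linarith
      have hbdd : ∀ t ∈ Set.Ico t0 1, x t ≤ x t0 * Real.exp 2 := by
        intro t ht
        have hLe := hLanti ⟨le_rfl, ht0mem.2⟩ ht ht.1
        have hxt := (hxge t ht).2
        have h2 : Real.log (x t) ≤ Real.log (x t0) + 2 := by
          simp only [hLdef] at hLe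
          have : t - t0 ≤ 1 := by
            have := ht.2; have := ht0mem.1; linarith
          linarith
        calc x t = Real.exp (Real.log (x t)) := (Real.exp_log hxt).symm
          _ ≤ Real.exp (Real.log (x t0) + 2) := Real.exp_le_exp.2 h2
          _ = x t0 * Real.exp 2 := by rw [Real.exp_add, Real.exp_log hxt0pos]
      have hIoo2 : Set.Ioo t0 1 ∈ nhdsWithin 1 (Set.Iio 1) :=
        Ioo_mem_nhdsLT ht0mem.2
      obtain ⟨t, hgt, htm⟩ := ((hxtop.eventually_gt_atTop (x t0 * Real.exp 2)).and
        (eventually_mem_set.2 hIoo2)).exists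
      exact absurd (hbdd t ⟨htm.1.le, htm.2⟩) (not_le.2 hgt)
    · -- 0 < c
      obtain ⟨X, hXlt, hX0⟩ := (((iGam_tendsto (n+1)).eventually (gt_mem_nhds hcpos)).and
        (eventually_ge_atTop (0:ℝ))).exists
      have hcont1 : ContinuousOn (iGam (n+1)) (Set.Icc 0 X) :=
        fun z _ => (iGam_hasDerivAt (n+1) z).continuousAt.continuousWithinAt
      have hmem : c ∈ Set.Icc (iGam (n+1) X) (iGam (n+1) 0) := by
        constructor
        · exact hXlt.le
        · rw [iGam_zero]; exact hc_lt_fac.le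
      obtain ⟨xs, hxsmem, hxseq⟩ := intermediate_value_Icc' hX0 hcont1 hmem
      have hxs0 : 0 < xs := by
        rcases eq_or_lt_of_le hxsmem.1 with h | h
        · exfalso
          rw [← h, iGam_zero] at hxseq
          rw [← hxseq] at hc_lt_fac
          exact lt_irrefl _ hc_lt_fac
        · exact h
      have hapos : 0 < iGam n xs := iGam_pos n hxs0.le
      have halt : iGam n xs < (n.factorial : ℝ) := by
        have h1 := iGam_strictAnti n (Set.mem_Ici.2 le_rfl) (Set.mem_Ici.2 hxs0.le) hxs0
        rwa [iGam_zero] at h1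
      obtain ⟨t1, ht1F, ht1mem⟩ := ((hFtend.eventually (gt_mem_nhds hapos)).and
        (eventually_mem_set.2 hIoo)).exists
      have hFcont1 : ContinuousOn F (Set.Icc 0 t1) :=
        hFcont.mono fun z hz => ⟨hz.1, lt_of_le_of_lt hz.2 ht1mem.2⟩
      set S : Set ℝ := Set.Icc 0 t1 ∩ F ⁻¹' (Set.Ici (iGam n xs)) with hSdef
      have hScl : IsClosed S :=
        hFcont1.preimage_isClosed_of_isClosed isClosed_Icc isClosed_Ici
      have hSne : (0:ℝ) ∈ S := ⟨⟨le_rfl, ht1mem.1.le⟩, by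
        simp only [Set.mem_preimage, Set.mem_Ici, hF0]; exact halt.le⟩
      have hScpt : IsCompact S := isCompact_Icc.of_isClosed_subset hScl fun z hz => hz.1
      have hsS : sSup S ∈ S := hScpt.sSup_mem ⟨0, hSne⟩
      have hs0 : 0 ≤ sSup S := hsS.1.1
      have hsa : iGam n xs ≤ F (sSup S) := hsS.2
      have hslt : sSup S < t1 := by
        rcases eq_or_lt_of_le hsS.1.2 with h | h
        · exfalso; rw [h] at hsa; linarith
        · exact h
      have hFlt : ∀ t ∈ Set.Ioc (sSup S) t1, F t < iGam n xs := by
        intro t ht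
        by_contra hge; push_neg at hge
        have htS : t ∈ S := ⟨⟨hs0.trans ht.1.le, ht.2⟩, hge⟩
        have := le_csSup hScpt.bddAbove htS
        linarith [ht.1]
      have hFmono : StrictMonoOn F (Set.Icc (sSup S) t1) := by
        refine strictMonoOn_of_deriv_pos (convex_Icc _ _)
          (hFcont.mono fun z hz => ⟨hs0.trans hz.1, lt_of_le_of_lt hz.2 ht1mem.2⟩) ?_
        intro t ht
        rw [interior_Icc] at ht
        have htI : t ∈ Set.Ioo (0:ℝ) 1 := ⟨lt_of_le_of_lt hs0 ht.1, ht.2.trans ht1mem.2⟩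
        rw [hFode t htI]
        have hFta : F t < iGam n xs := hFlt t ⟨ht.1, ht.2.le⟩
        have hxIci : x t ∈ Set.Ici (0:ℝ) := Set.mem_Ici.2 (hx_nonneg t ⟨htI.1.le, htI.2⟩)
        have hxgt : xs < x t := by
          by_contra hle2; push_neg at hle2
          rcases eq_or_lt_of_le hle2 with h | h
          · rw [hFdef] at hFta; simp only [h] at hFta; exact lt_irrefl _ hFta
          · have := iGam_strictAnti n hxIci (Set.mem_Ici.2 hxs0.le) h
            rw [hFdef] at hFta; simp only at hFta; linarith
        have h7 := iGam_strictAnti (n+1) (Set.mem_Ici.2 hxs0.le) hxIci hxgt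
        rw [hxseq] at h7
        linarith
      have h8 := hFmono (Set.left_mem_Icc.2 hslt.le) (Set.right_mem_Icc.2 hslt.le) hslt
      linarith
  have hθlt : θ < 1 / ((n:ℝ)+1) := by
    have h1 : 1 - 1 / (((n:ℝ)+1) * θ) < 0 := by
      by_contra h; push_neg at h
      have h2 : (0:ℝ) ≤ c := by
        rw [hcdef]; push_cast
        exact mul_nonneg hfacpos.le h
      linarith
    have hpos : 0 < ((n:ℝ)+1) * θ := by positivity
    have h2 : 1 < 1 / (((n:ℝ)+1) * θ) := by linarith
    rw [lt_div_iff₀ hpos, one_mul] at h2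
    rw [lt_div_iff₀ hKpos]
    nlinarith
  constructor
  · push_cast
    exact hθlt
  · have hneg : ∀ t ∈ Set.Ioo (0:ℝ) 1, deriv F t < 0 := by
      intro t ht
      rw [hFode t ht]
      have := iGam_pos (n+1) (hx_nonneg t ⟨ht.1.le, ht.2⟩)
      linarith
    have hxm := hxmono hneg
    intro s hs t ht hst
    have hx : x s < x t := hxm hs ht hst
    have h1 : Real.log (y t) < Real.log (y s) := by
      simp only [hxdef] at hx; linarith
    calc y t = Real.exp (Real.log (y t)) := (Real.exp_log (hypos t ht)).symm
      _ < Real.exp (Real.log (y s)) := Real.exp_lt_exp.2 h1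
      _ = y s := Real.exp_log (hypos s hs)
end

section
/- For k=1, there exists a unique constant θ ∈ (0,1) such that ∫_0^1 1/( 1/θ - 1 + Γ_2(-ln y) ) dy = 1, and for this θ, writing β = 1/θ, the equation is equivalent to ∫_0^1 (β - 1 + y(1 - ln y))^{-1} dy = 1. -/
open MeasureTheory intervalIntegral Set

noncomputable def hfun (y : ℝ) : ℝ := y * (1 - Real.log y)

lemma hfun_cont : Continuous hfun := by
  have : hfun = fun y => y - y * Real.log y := by
    funext y; simp [hfun]; ring
  rw [this]
  exact continuous_id.sub Real.continuous_mul_log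

lemma uGamma_two (x : ℝ) (hx : 0 ≤ x) : uGamma 2 x = (x + 1) * Real.exp (-x) := by
  have hderiv : ∀ t ∈ Set.Ioi x, HasDerivAt (fun t => -((t + 1) * Real.exp (-t)))
      (t * Real.exp (-t)) t := by
    intro t _
    have h1 : HasDerivAt (fun t : ℝ => -t) (-1) t := (hasDerivAt_id t).neg
    have h2 : HasDerivAt (fun t : ℝ => Real.exp (-t)) (Real.exp (-t) * (-1)) t :=
      (Real.hasDerivAt_exp (-t)).comp t h1
    have h3 := (((hasDerivAt_id t).add_const 1).mul h2).neg
    exact h3.congr_deriv (by simp only [id]; ring)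
  have hnonneg : ∀ t ∈ Set.Ioi x, 0 ≤ t * Real.exp (-t) := by
    intro t ht
    have : (0:ℝ) < t := lt_of_le_of_lt hx ht
    positivity
  have htend : Filter.Tendsto (fun t => -((t + 1) * Real.exp (-t))) Filter.atTop (nhds 0) := by
    have h1 := Real.tendsto_pow_mul_exp_neg_atTop_nhds_zero 1
    have h2 := Real.tendsto_exp_neg_atTop_nhds_zero
    have h3 := (h1.add h2).neg
    simp only [pow_one, neg_zero, add_zero] at h3
    convert h3 using 2 with t
    ring
  have := MeasureTheory.integral_Ioi_of_hasDerivAt_of_nonneg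
    (Continuous.continuousWithinAt (by continuity)) hderiv hnonneg htend
  simp only [uGamma]
  norm_num at this ⊢
  rw [this]

lemma uGamma_eq_hfun {y : ℝ} (hy : y ∈ Set.Ioc (0:ℝ) 1) :
    uGamma 2 (-Real.log y) = hfun y := by
  have hl : Real.log y ≤ 0 := Real.log_nonpos hy.1.le hy.2
  rw [uGamma_two _ (by linarith), hfun, neg_neg, Real.exp_log hy.1]
  ring

lemma hfun_nonneg {y : ℝ} (hy : y ∈ Set.Icc (0:ℝ) 1) : 0 ≤ hfun y := by
  rcases eq_or_lt_of_le hy.1 with h | h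
  · simp [hfun, ← h]
  · have hl : Real.log y ≤ 0 := Real.log_nonpos h.le hy.2
    have : (0:ℝ) ≤ 1 - Real.log y := by linarith
    exact mul_nonneg hy.1 this

lemma hfun_le_one {y : ℝ} (hy : y ∈ Set.Icc (0:ℝ) 1) : hfun y ≤ 1 := by
  rcases eq_or_lt_of_le hy.1 with h | h
  · simp [hfun, ← h]
  · have h1 : Real.log (1/y) ≤ 1/y - 1 := Real.log_le_sub_one_of_pos (by positivity)
    rw [one_div, Real.log_inv] at h1
    have h2 : y * (-Real.log y) ≤ y * (y⁻¹ - 1) := by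
      apply mul_le_mul_of_nonneg_left h1 h.le
    rw [mul_sub, mul_inv_cancel₀ h.ne'] at h2
    simp only [hfun]
    nlinarith

lemma hfun_monoOn : MonotoneOn hfun (Set.Icc (0:ℝ) 1) := by
  have heq : ∀ y ∈ Set.Ioo (0:ℝ) 1, HasDerivAt hfun (-Real.log y) y := by
    intro y hy
    have h1 : HasDerivAt (fun y : ℝ => y * Real.log y) (Real.log y + 1) y :=
      Real.hasDerivAt_mul_log hy.1.ne'
    have h2 := (hasDerivAt_id y).sub h1
    have : hfun = fun y => y - y * Real.log y := by funext y; simp [hfun]; ring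
    rw [this]
    exact h2.congr_deriv (by ring)
  apply monotoneOn_of_deriv_nonneg (convex_Icc 0 1) (hfun_cont.continuousOn)
  · intro y hy
    rw [interior_Icc] at hy
    exact (heq y hy).differentiableAt.differentiableWithinAt
  · intro y hy
    rw [interior_Icc] at hy
    rw [(heq y hy).deriv]
    have : Real.log y ≤ 0 := Real.log_nonpos hy.1.le hy.2.le
    linarith

noncomputable def G (c : ℝ) : ℝ := ∫ y in (0:ℝ)..1, (c + hfun y)⁻¹

lemma denom_pos {c y : ℝ} (hc : 0 < c) (hy : y ∈ Set.Icc (0:ℝ) 1) : 0 < c + hfun y := by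
  have := hfun_nonneg hy
  linarith

lemma G_contOn {c : ℝ} (hc : 0 < c) :
    ContinuousOn (fun y => (c + hfun y)⁻¹) (Set.Icc (0:ℝ) 1) := by
  apply ContinuousOn.inv₀ (continuous_const.add hfun_cont).continuousOn
  intro y hy
  exact (denom_pos hc hy).ne'

lemma G_integrable {c : ℝ} (hc : 0 < c) {a b : ℝ} (ha : a ∈ Set.Icc (0:ℝ) 1)
    (hb : b ∈ Set.Icc (0:ℝ) 1) :
    IntervalIntegrable (fun y => (c + hfun y)⁻¹) volume a b := by
  apply ContinuousOn.intervalIntegrable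
  apply (G_contOn hc).mono
  exact Set.uIcc_subset_Icc ha hb

lemma G_anti {c₁ c₂ : ℝ} (h1 : 0 < c₁) (h12 : c₁ < c₂) : G c₂ < G c₁ := by
  apply intervalIntegral.integral_lt_integral_of_continuousOn_of_le_of_exists_lt
    one_pos (G_contOn (h1.trans h12)) (G_contOn h1)
  · intro y hy
    have hy' : y ∈ Set.Icc (0:ℝ) 1 := ⟨hy.1.le, hy.2⟩
    exact inv_anti₀ (denom_pos h1 hy') (by linarith)
  · refine ⟨1, by norm_num, ?_⟩
    have h1' : (0:ℝ) < c₁ + hfun 1 := denom_pos h1 (by norm_num)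
    apply inv_strictAnti₀ h1'
    linarith

noncomputable def hclamp (y : ℝ) : ℝ := min 1 (max 0 (hfun y))

lemma hclamp_eq {y : ℝ} (hy : y ∈ Set.Icc (0:ℝ) 1) : hclamp y = hfun y := by
  rw [hclamp, max_eq_right (hfun_nonneg hy), min_eq_right (hfun_le_one hy)]

lemma hclamp_nonneg (y : ℝ) : 0 ≤ hclamp y :=
  le_min zero_le_one (le_max_left 0 _)

lemma hclamp_cont : Continuous hclamp :=
  continuous_const.min (continuous_const.max hfun_cont)

lemma G_contOn_param : ContinuousOn G (Set.Icc (1/1024 : ℝ) 2) := by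
  have hcont : Continuous (fun c => ∫ y in (0:ℝ)..1, (max c (1/1024) + hclamp y)⁻¹) := by
    apply intervalIntegral.continuous_parametric_intervalIntegral_of_continuous' (μ := volume)
      (f := fun c y => (max c (1/1024) + hclamp y)⁻¹)
    apply Continuous.inv₀
    · exact ((continuous_fst.max continuous_const).add (hclamp_cont.comp continuous_snd))
    · rintro ⟨c, y⟩
      have h1 : (1/1024 : ℝ) ≤ max c (1/1024) := le_max_right _ _
      have h2 := hclamp_nonneg y
      simp only [Function.uncurry]
      positivity
  apply (hcont.continuousOn (s := Set.Icc (1/1024:ℝ) 2)).congr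
  intro c hc
  rw [G]
  apply intervalIntegral.integral_congr
  intro y hy
  rw [Set.uIcc_of_le (by norm_num : (0:ℝ) ≤ 1)] at hy
  simp only []
  rw [hclamp_eq hy, max_eq_left hc.1]

lemma G_upper : G 2 ≤ 1/2 := by
  have h : ∀ y ∈ Set.Icc (0:ℝ) 1, (2 + hfun y)⁻¹ ≤ (1/2 : ℝ) := by
    intro y hy
    have h1 := hfun_nonneg hy
    rw [show (1/2 : ℝ) = (2:ℝ)⁻¹ by norm_num]
    exact inv_anti₀ (by norm_num) (by linarith)
  have := intervalIntegral.integral_mono_on (by norm_num : (0:ℝ) ≤ 1)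
    (G_integrable two_pos (by norm_num) (by norm_num)) intervalIntegrable_const h
  simpa [G] using this

lemma seg_lb {c a b : ℝ} (hc : 0 < c) (ha : a ∈ Set.Icc (0:ℝ) 1) (hb : b ∈ Set.Icc (0:ℝ) 1)
    (hab : a ≤ b) : (b - a) * (c + hfun b)⁻¹ ≤ ∫ y in a..b, (c + hfun y)⁻¹ := by
  have h : ∀ y ∈ Set.Icc a b, (c + hfun b)⁻¹ ≤ (c + hfun y)⁻¹ := by
    intro y hy
    have hy' : y ∈ Set.Icc (0:ℝ) 1 := ⟨le_trans ha.1 hy.1, le_trans hy.2 hb.2⟩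
    have := hfun_monoOn hy' hb (hy.2)
    exact inv_anti₀ (denom_pos hc hy') (by linarith)
  have := intervalIntegral.integral_mono_on hab intervalIntegrable_const
    (G_integrable hc ha hb) h
  simpa [smul_eq_mul] using this

lemma G_lower : 1 ≤ G (1/1024) := by
  have hc : (0:ℝ) < 1/1024 := by norm_num
  set c : ℝ := 1/1024
  have I : ∀ a b : ℝ, a ∈ Set.Icc (0:ℝ) 1 → b ∈ Set.Icc (0:ℝ) 1 →
      IntervalIntegrable (fun y => (c + hfun y)⁻¹) volume a b := fun a b ha hb =>
    G_integrable hc ha hb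
  have e1 := intervalIntegral.integral_add_adjacent_intervals
    (I 0 (1/16) (by norm_num) (by norm_num)) (I (1/16) (1/8) (by norm_num) (by norm_num))
  have e2 := intervalIntegral.integral_add_adjacent_intervals
    (I 0 (1/8) (by norm_num) (by norm_num)) (I (1/8) (1/4) (by norm_num) (by norm_num))
  have e3 := intervalIntegral.integral_add_adjacent_intervals
    (I 0 (1/4) (by norm_num) (by norm_num)) (I (1/4) (1/2) (by norm_num) (by norm_num))
  have e4 := intervalIntegral.integral_add_adjacent_intervals
    (I 0 (1/2) (by norm_num) (by norm_num)) (I (1/2) 1 (by norm_num) (by norm_num))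
  have b0 : (0:ℝ) ≤ ∫ y in (0:ℝ)..(1/16), (c + hfun y)⁻¹ := by
    apply intervalIntegral.integral_nonneg (by norm_num)
    intro y hy
    exact (inv_nonneg).2 (denom_pos hc ⟨hy.1, le_trans hy.2 (by norm_num)⟩).le
  have b1 := seg_lb hc (by norm_num : (1/16 : ℝ) ∈ Set.Icc (0:ℝ) 1) (by norm_num : (1/8 : ℝ) ∈ Set.Icc (0:ℝ) 1) (by norm_num)
  have b2 := seg_lb hc (by norm_num : (1/8 : ℝ) ∈ Set.Icc (0:ℝ) 1) (by norm_num : (1/4 : ℝ) ∈ Set.Icc (0:ℝ) 1) (by norm_num)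
  have b3 := seg_lb hc (by norm_num : (1/4 : ℝ) ∈ Set.Icc (0:ℝ) 1) (by norm_num : (1/2 : ℝ) ∈ Set.Icc (0:ℝ) 1) (by norm_num)
  have b4 := seg_lb hc (by norm_num : (1/2 : ℝ) ∈ Set.Icc (0:ℝ) 1) (by norm_num : (1 : ℝ) ∈ Set.Icc (0:ℝ) 1) (by norm_num)
  -- values of hfun
  have l2 : Real.log (1/2 : ℝ) = -Real.log 2 := by rw [one_div, Real.log_inv]
  have l4 : Real.log (1/4 : ℝ) = -(2*Real.log 2) := by
    rw [one_div, Real.log_inv, show (4:ℝ) = 2^2 by norm_num, Real.log_pow]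
    push_cast; ring
  have l8 : Real.log (1/8 : ℝ) = -(3*Real.log 2) := by
    rw [one_div, Real.log_inv, show (8:ℝ) = 2^3 by norm_num, Real.log_pow]
    push_cast; ring
  have hfun1 : hfun 1 = 1 := by simp [hfun]
  have hfun2 : hfun (1/2) = (1/2)*(1 + Real.log 2) := by rw [hfun, l2]; ring
  have hfun4 : hfun (1/4) = (1/4)*(1 + 2*Real.log 2) := by rw [hfun, l4]; ring
  have hfun8 : hfun (1/8) = (1/8)*(1 + 3*Real.log 2) := by rw [hfun, l8]; ring
  have hL : Real.log 2 < 0.6931471808 := Real.log_two_lt_d9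
  have hL0 : 0 < Real.log 2 := Real.log_pos (by norm_num)
  set L := Real.log 2
  -- inverse lower bounds
  have d2 : (c + (1/2)*(1+(0.6931471808:ℝ)))⁻¹ ≤ (c + hfun (1/2))⁻¹ := by
    rw [hfun2]; exact inv_anti₀ (by positivity) (by linarith)
  have d3 : (c + (1/4)*(1+2*(0.6931471808:ℝ)))⁻¹ ≤ (c + hfun (1/4))⁻¹ := by
    rw [hfun4]; exact inv_anti₀ (by positivity) (by linarith)
  have d4 : (c + (1/8)*(1+3*(0.6931471808:ℝ)))⁻¹ ≤ (c + hfun (1/8))⁻¹ := by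
    rw [hfun8]; exact inv_anti₀ (by positivity) (by linarith)
  have final : (1:ℝ) ≤ (1 - 1/2) * (c + 1)⁻¹ + (1/2 - 1/4) * (c + (1/2)*(1+(0.6931471808:ℝ)))⁻¹
      + (1/4 - 1/8) * (c + (1/4)*(1+2*(0.6931471808:ℝ)))⁻¹
      + (1/8 - 1/16) * (c + (1/8)*(1+3*(0.6931471808:ℝ)))⁻¹ := by
    norm_num
  rw [hfun1] at b4
  have hG : G c = (∫ y in (0:ℝ)..(1/16), (c + hfun y)⁻¹)
      + (∫ y in (1/16:ℝ)..(1/8), (c + hfun y)⁻¹)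
      + (∫ y in (1/8:ℝ)..(1/4), (c + hfun y)⁻¹)
      + (∫ y in (1/4:ℝ)..(1/2), (c + hfun y)⁻¹)
      + (∫ y in (1/2:ℝ)..1, (c + hfun y)⁻¹) := by
    rw [G]; linarith [e1, e2, e3, e4]
  rw [hG]
  linarith

lemma key (c : ℝ) :
    (∫ y in (0:ℝ)..1, 1 / (c + uGamma 2 (-Real.log y))) = G c := by
  rw [G]
  apply intervalIntegral.integral_congr_ae
  apply Filter.Eventually.of_forall
  intro y hy
  rw [Set.uIoc_of_le (by norm_num : (0:ℝ) ≤ 1)] at hy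
  rw [uGamma_eq_hfun hy, one_div]

/-- For `k = 1`, there exists a unique `θ ∈ (0,1)` with
`∫_0^1 1/(1/θ - 1 + Γ_2(-ln y)) dy = 1`, and for `θ ∈ (0,1)` (with `β = 1/θ`) this
equation is equivalent to `∫_0^1 (β - 1 + y(1 - ln y))⁻¹ dy = 1`. -/
theorem stmt12 :
    (∃! θ : ℝ, θ ∈ Set.Ioo (0 : ℝ) 1 ∧
      (∫ y in (0 : ℝ)..1, 1 / (1 / θ - 1 + uGamma 2 (-Real.log y))) = 1) ∧
    ∀ θ ∈ Set.Ioo (0 : ℝ) 1,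
      ((∫ y in (0 : ℝ)..1, 1 / (1 / θ - 1 + uGamma 2 (-Real.log y))) = 1 ↔
        (∫ y in (0 : ℝ)..1, (1 / θ - 1 + y * (1 - Real.log y))⁻¹) = 1) := by
  constructor
  · obtain ⟨c, hcmem, hGc⟩ : ∃ c ∈ Set.Icc (1/1024:ℝ) 2, G c = 1 := by
      have h1 : (1:ℝ) ∈ Set.Icc (G 2) (G (1/1024)) := ⟨by linarith [G_upper], G_lower⟩
      obtain ⟨c, hc, hgc⟩ := intermediate_value_Icc' (by norm_num : (1/1024:ℝ) ≤ 2)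
        G_contOn_param h1
      exact ⟨c, hc, hgc⟩
    have hcpos : 0 < c := lt_of_lt_of_le (by norm_num) hcmem.1
    have hkey : (1:ℝ)/((c+1)⁻¹) - 1 = c := by
      rw [one_div, inv_inv]; ring
    refine ⟨(c+1)⁻¹, ⟨⟨by positivity, ?_⟩, ?_⟩, ?_⟩
    · exact inv_lt_one_of_one_lt₀ (by linarith)
    · rw [hkey, key c]; exact hGc
    · rintro θ' ⟨⟨h0, h1'⟩, heq⟩
      set c' := 1/θ' - 1 with hc'
      have hc'pos : 0 < c' := by
        have := one_lt_one_div h0 h1'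
        rw [hc']; linarith
      rw [key c'] at heq
      have hcc : c' = c := by
        by_contra h
        rcases lt_or_gt_of_ne h with hlt | hgt
        · have := G_anti hc'pos hlt
          rw [hGc, heq] at this; exact lt_irrefl _ this
        · have := G_anti hcpos hgt
          rw [hGc, heq] at this; exact lt_irrefl _ this
      have h2 : 1/θ' = c + 1 := by rw [← hcc, hc']; ring
      rw [one_div] at h2
      rw [← inv_inv θ', h2]
  · intro θ _
    rw [key (1/θ - 1)]
    rw [show (fun y => (1 / θ - 1 + y * (1 - Real.log y))⁻¹) =
      (fun y => (1/θ - 1 + hfun y)⁻¹) from rfl]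
    exact Iff.rfl
end

section
/- Let k be a positive integer and n > (k+1) + 2(k+1)^2, and set n̄ = n - k - 1. Then for every u ∈ (0,1), (n-k+1)(n-k)·C(n,k-1)·(1-u)^{n-k-1}·u^{k-1} ≤ (n/(k-1)!)·(1 + 4k²/n)·(n̄u)^{k-1}·e^{-n̄u}·n̄. -/
set_option maxHeartbeats 1000000

lemma exp_le_one_add_two_mul {x : ℝ} (h0 : 0 ≤ x) (h1 : x ≤ 1/2) :
    Real.exp x ≤ 1 + 2 * x := by
  have hx1 : (0:ℝ) < 1 - x := by linarith
  have h2 : 1 - x ≤ Real.exp (-x) := by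
    have := Real.add_one_le_exp (-x); linarith
  have h3 : Real.exp x ≤ 1 / (1 - x) := by
    rw [le_div_iff₀ hx1]
    calc Real.exp x * (1 - x) ≤ Real.exp x * Real.exp (-x) :=
          mul_le_mul_of_nonneg_left h2 (Real.exp_pos x).le
      _ = 1 := by rw [← Real.exp_add]; simp
  refine h3.trans ?_
  rw [div_le_iff₀ hx1]; nlinarith

/-- Upper bound on `-g'_{n,k}(u)`: for `n > (k+1) + 2(k+1)²` and `n̄ = n-k-1`,
`(n-k+1)(n-k)·C(n,k-1)·(1-u)^{n-k-1}·u^{k-1}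
  ≤ (n/(k-1)!)·(1 + 4k²/n)·(n̄u)^{k-1}·e^{-n̄u}·n̄`. -/
theorem stmt13 (n k : ℕ) (hk : 0 < k) (hn : (k + 1) + 2 * (k + 1) ^ 2 < n)
    (u : ℝ) (hu : u ∈ Set.Ioo (0 : ℝ) 1) :
    ((n - k + 1 : ℕ) : ℝ) * ((n - k : ℕ) : ℝ) * (n.choose (k - 1)) *
        (1 - u) ^ (n - k - 1) * u ^ (k - 1)
      ≤ ((n : ℝ) / (Nat.factorial (k - 1) : ℝ)) * (1 + 4 * (k : ℝ) ^ 2 / n) *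
          (((n - k - 1 : ℕ) : ℝ) * u) ^ (k - 1) *
          Real.exp (-(((n - k - 1 : ℕ) : ℝ) * u)) * ((n - k - 1 : ℕ) : ℝ) := by
  obtain ⟨hu0, hu1⟩ := hu
  obtain ⟨j, rfl⟩ : ∃ j, k = j + 1 := ⟨k - 1, by omega⟩
  obtain ⟨m, rfl⟩ : ∃ m, n = m + (j + 1) + 1 := ⟨n - (j + 1) - 1, by omega⟩
  have hm : 2 * (j + 2) ^ 2 < m := by nlinarith [hn]
  have e1 : m + (j + 1) + 1 - (j + 1) = m + 1 := by omega
  have e2 : m + (j + 1) + 1 - (j + 1) - 1 = m := by omega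
  have e3 : j + 1 - 1 = j := by omega
  rw [e2, e1, e3]
  -- notation
  set M : ℝ := (m : ℝ) with hMdef
  have hM2 : 2 * ((j : ℝ) + 2) ^ 2 < M := by rw [hMdef]; exact_mod_cast hm
  have hj0 : (0:ℝ) ≤ (j:ℝ) := Nat.cast_nonneg j
  have hM0 : (0:ℝ) < M := by nlinarith
  have hN0 : (0:ℝ) < M + (j:ℝ) + 2 := by linarith
  have hfac : (0:ℝ) < (Nat.factorial j : ℝ) := by
    exact_mod_cast j.factorial_pos
  -- the key natural-number identity
  have key : (m + 2) * ((m + 1) * ((m + (j + 1) + 1).choose j * j.factorial))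
      = (m + (j + 1) + 1) * (m + j + 1).descFactorial (j + 1) := by
    have h1 : (m + j + 2).descFactorial j = j.factorial * (m + j + 2).choose j :=
      Nat.descFactorial_eq_factorial_mul_choose _ _
    have h2 : (m + j + 2).descFactorial (j + 2)
        = (m + j + 2) * (m + j + 1).descFactorial (j + 1) :=
      Nat.succ_descFactorial_succ _ _
    rw [Nat.descFactorial_succ, Nat.descFactorial_succ, h1] at h2
    have e4 : m + j + 2 - (j + 1) = m + 1 := by omega
    have e5 : m + j + 2 - j = m + 2 := by omega
    rw [e4, e5] at h2
    have e6 : m + (j + 1) + 1 = m + j + 2 := by omega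
    rw [e6]
    linarith [h2]
  have hdesc : ((m + j + 1).descFactorial (j + 1) : ℝ) ≤ (M + (j:ℝ) + 1) ^ (j + 1) := by
    have h := Nat.descFactorial_le_pow (m + j + 1) (j + 1)
    have h' : ((m + j + 1).descFactorial (j + 1) : ℝ) ≤ ((m + j + 1 : ℕ) : ℝ) ^ (j + 1) := by
      exact_mod_cast h
    convert h' using 2
    push_cast; ring
  -- the coefficient bound
  set K : ℝ := (j : ℝ) + 1 with hKdef
  have hK0 : (0:ℝ) < K := by simp [hKdef]; linarith
  have hKM : K ^ 2 / M ≤ 1 / 2 := by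
    rw [div_le_iff₀ hM0]
    nlinarith
  have hcoef : (M + (j:ℝ) + 1) ^ (j + 1)
      ≤ (1 + 4 * K ^ 2 / (M + (j:ℝ) + 2)) * M ^ (j + 1) := by
    have b1 : 1 + K / M ≤ Real.exp (K / M) := by
      have := Real.add_one_le_exp (K / M); linarith
    have b2 : (1 + K / M) ^ (j + 1) ≤ Real.exp (K / M) ^ (j + 1) :=
      pow_le_pow_left₀ (by positivity) b1 _
    have b3 : Real.exp (K / M) ^ (j + 1) = Real.exp (K ^ 2 / M) := by
      rw [← Real.exp_nat_mul]
      congr 1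
      push_cast [hKdef]
      field_simp
    have b4 : Real.exp (K ^ 2 / M) ≤ 1 + 2 * (K ^ 2 / M) :=
      exp_le_one_add_two_mul (by positivity) hKM
    have b5 : 1 + 2 * (K ^ 2 / M) ≤ 1 + 4 * K ^ 2 / (M + (j:ℝ) + 2) := by
      have h6 : 2 * (K ^ 2 / M) ≤ 4 * K ^ 2 / (M + (j:ℝ) + 2) := by
        rw [show 2 * (K ^ 2 / M) = 2 * K ^ 2 / M from by ring,
          div_le_div_iff₀ hM0 hN0, hKdef]
        nlinarith [sq_nonneg ((j:ℝ) + 1)]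
      linarith
    calc (M + (j:ℝ) + 1) ^ (j + 1) = (M * (1 + K / M)) ^ (j + 1) := by
          rw [hKdef]; field_simp; ring
      _ = M ^ (j + 1) * (1 + K / M) ^ (j + 1) := mul_pow _ _ _
      _ ≤ M ^ (j + 1) * Real.exp (K ^ 2 / M) := by
          apply mul_le_mul_of_nonneg_left (b2.trans_eq b3) (by positivity)
      _ ≤ M ^ (j + 1) * (1 + 4 * K ^ 2 / (M + (j:ℝ) + 2)) := by
          apply mul_le_mul_of_nonneg_left (b4.trans b5) (by positivity)
      _ = (1 + 4 * K ^ 2 / (M + (j:ℝ) + 2)) * M ^ (j + 1) := by ring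
  -- coefficient comparison in ℝ
  set C : ℝ := ((m + (j + 1) + 1).choose j : ℝ) with hCdef
  set B : ℝ := (M + (j:ℝ) + 2) / (Nat.factorial j : ℝ) * (1 + 4 * K ^ 2 / (M + (j:ℝ) + 2))
    with hBdef
  have keyR : (M + 2) * ((M + 1) * (C * (Nat.factorial j : ℝ)))
      = (M + (j:ℝ) + 2) * ((m + j + 1).descFactorial (j + 1) : ℝ) := by
    have := congrArg (fun x : ℕ => (x : ℝ)) key
    push_cast at this
    rw [hMdef, hCdef]
    push_cast
    linarith [this]
  have hA : (M + 2) * (M + 1) * C ≤ B * M ^ (j + 1) := by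
    rw [← mul_le_mul_iff_of_pos_right hfac]
    calc (M + 2) * (M + 1) * C * (Nat.factorial j : ℝ)
        = (M + (j:ℝ) + 2) * ((m + j + 1).descFactorial (j + 1) : ℝ) := by
          rw [← keyR]; ring
      _ ≤ (M + (j:ℝ) + 2) * (M + (j:ℝ) + 1) ^ (j + 1) :=
          mul_le_mul_of_nonneg_left hdesc hN0.le
      _ ≤ (M + (j:ℝ) + 2) * ((1 + 4 * K ^ 2 / (M + (j:ℝ) + 2)) * M ^ (j + 1)) :=
          mul_le_mul_of_nonneg_left hcoef hN0.le
      _ = B * M ^ (j + 1) * (Nat.factorial j : ℝ) := by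
          rw [hBdef]; field_simp
  -- exponential comparison
  have hExp : (1 - u) ^ m ≤ Real.exp (-(M * u)) := by
    have h1 : 1 - u ≤ Real.exp (-u) := by
      have := Real.add_one_le_exp (-u); linarith
    calc (1 - u) ^ m ≤ Real.exp (-u) ^ m := pow_le_pow_left₀ (by linarith) h1 m
      _ = Real.exp (-(M * u)) := by
          rw [← Real.exp_nat_mul]; congr 1; rw [hMdef]; ring
  -- assemble
  have hB0 : 0 ≤ B := by
    rw [hBdef]; positivity
  have main : ((M + 2) * (M + 1) * C * (1 - u) ^ m) * u ^ j
      ≤ ((B * M ^ (j + 1)) * Real.exp (-(M * u))) * u ^ j := by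
    apply mul_le_mul_of_nonneg_right _ (pow_nonneg hu0.le j)
    apply mul_le_mul hA hExp (pow_nonneg (by linarith) m) (by positivity)
  calc ((m + 1 + 1 : ℕ) : ℝ) * ((m + 1 : ℕ) : ℝ) * ((m + (j + 1) + 1).choose j) *
        (1 - u) ^ m * u ^ j
      = ((M + 2) * (M + 1) * C * (1 - u) ^ m) * u ^ j := by
        rw [hMdef, hCdef]; push_cast; ring
    _ ≤ ((B * M ^ (j + 1)) * Real.exp (-(M * u))) * u ^ j := main
    _ = ((m + (j + 1) + 1 : ℕ) : ℝ) / (Nat.factorial j : ℝ) *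
          (1 + 4 * ((j + 1 : ℕ) : ℝ) ^ 2 / ((m + (j + 1) + 1 : ℕ) : ℝ)) *
          ((M : ℝ) * u) ^ j * Real.exp (-(M * u)) * M := by
        rw [hBdef, hKdef]; push_cast; ring
end

section
/- Let k be a positive integer, n > 4k, set n̄ = n - k - 1, and let u ∈ (0, s) with s ≤ 1/(2√n̄). Then (n-k+1)(n-k)·C(n,k-1)·(1-u)^{n-k-1}·u^{k-1} ≥ (n/(k-1)!)·(1 - 4k²/n)·(1 - n̄s²/(1-s))·(n̄u)^{k-1}·e^{-n̄u}·n̄. -/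
lemma aux_desc : ∀ (k n : ℕ), k + 1 ≤ n → n * (n - k - 1) ^ k ≤ n.descFactorial (k + 1)
  | 0, n, _ => by simp [Nat.descFactorial]
  | (k+1), n, h => by
    have ih := aux_desc k n (by omega)
    rw [Nat.descFactorial_succ]
    calc n * (n - (k+1) - 1) ^ (k+1)
        ≤ n * (n - k - 1) ^ (k+1) := by
          exact Nat.mul_le_mul_left _ (Nat.pow_le_pow_left (by omega) _)
      _ = (n - (k+1)) * (n * (n - k - 1) ^ k) := by
          have : n - k - 1 = n - (k+1) := by omega
          rw [this]; ring
      _ ≤ (n - (k+1)) * n.descFactorial (k+1) := Nat.mul_le_mul_left _ ih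

lemma aux_exp (m : ℕ) (s u : ℝ) (hs2 : s ≤ 1/2) (hu0 : 0 < u) (hus : u < s) :
    (1 - (m : ℝ) * s ^ 2 / (1 - s)) * Real.exp (-((m : ℝ) * u)) ≤ (1 - u) ^ m := by
  have hs1 : 1 - s > 0 := by linarith
  have hu1 : 1 - u > 0 := by linarith
  have h1 : Real.exp (-(u / (1 - u))) ≤ 1 - u := by
    have h := Real.add_one_le_exp (u / (1 - u))
    have h2 : 1 / (1 - u) ≤ Real.exp (u / (1 - u)) := by
      have heq : u / (1 - u) + 1 = 1 / (1 - u) := by field_simp; ring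
      linarith [heq ▸ h]
    rw [Real.exp_neg]
    calc (Real.exp (u / (1-u)))⁻¹ ≤ (1 / (1-u))⁻¹ := by
          apply inv_anti₀ (by positivity) h2
      _ = 1 - u := by field_simp
  have h2 : Real.exp (-((m : ℝ) * (u / (1 - u)))) ≤ (1 - u) ^ m := by
    calc Real.exp (-((m : ℝ) * (u / (1 - u)))) = (Real.exp (-(u / (1-u)))) ^ m := by
          rw [← Real.exp_nat_mul]; ring_nf
      _ ≤ (1 - u) ^ m := pow_le_pow_left₀ (Real.exp_nonneg _) h1 m
  have hdecomp : (m : ℝ) * (u / (1 - u)) = m * u + m * (u ^ 2 / (1 - u)) := by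
    field_simp; ring
  have h3 : (1 - (m : ℝ) * (u ^ 2 / (1 - u))) ≤ Real.exp (-((m : ℝ) * (u ^ 2 / (1 - u)))) := by
    have := Real.add_one_le_exp (-((m : ℝ) * (u ^ 2 / (1 - u)))); linarith
  have h4 : u ^ 2 / (1 - u) ≤ s ^ 2 / (1 - s) := by
    apply div_le_div₀ (by positivity) (by nlinarith) hs1 (by linarith)
  calc (1 - (m : ℝ) * s ^ 2 / (1 - s)) * Real.exp (-((m : ℝ) * u))
      ≤ (1 - (m : ℝ) * (u ^ 2 / (1 - u))) * Real.exp (-((m : ℝ) * u)) := by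
        apply mul_le_mul_of_nonneg_right _ (Real.exp_nonneg _)
        have : (m : ℝ) * (u ^ 2 / (1 - u)) ≤ (m : ℝ) * (s ^ 2 / (1 - s)) :=
          mul_le_mul_of_nonneg_left h4 (Nat.cast_nonneg m)
        rw [mul_div_assoc]; linarith
    _ ≤ Real.exp (-((m : ℝ) * (u ^ 2 / (1 - u)))) * Real.exp (-((m : ℝ) * u)) :=
        mul_le_mul_of_nonneg_right h3 (Real.exp_nonneg _)
    _ = Real.exp (-((m : ℝ) * (u / (1 - u)))) := by
        rw [← Real.exp_add, hdecomp]; ring_nf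
    _ ≤ (1 - u) ^ m := h2

/-- Lower bound on `-g'_{n,k}(u)`: for `n > 4k`, `n̄ = n-k-1`, `u ∈ (0,s)` with
`s ≤ 1/(2√n̄)`,
`(n-k+1)(n-k)·C(n,k-1)·(1-u)^{n-k-1}·u^{k-1}
  ≥ (n/(k-1)!)·(1 - 4k²/n)·(1 - n̄s²/(1-s))·(n̄u)^{k-1}·e^{-n̄u}·n̄`. -/
theorem stmt14 (n k : ℕ) (hk : 0 < k) (hn : 4 * k < n)
    (s : ℝ) (hs : s ≤ 1 / (2 * Real.sqrt ((n - k - 1 : ℕ) : ℝ)))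
    (u : ℝ) (hu : u ∈ Set.Ioo (0 : ℝ) s) :
    ((n : ℝ) / (Nat.factorial (k - 1) : ℝ)) * (1 - 4 * (k : ℝ) ^ 2 / n) *
        (1 - ((n - k - 1 : ℕ) : ℝ) * s ^ 2 / (1 - s)) *
        (((n - k - 1 : ℕ) : ℝ) * u) ^ (k - 1) *
        Real.exp (-(((n - k - 1 : ℕ) : ℝ) * u)) * ((n - k - 1 : ℕ) : ℝ)
      ≤ ((n - k + 1 : ℕ) : ℝ) * ((n - k : ℕ) : ℝ) * (n.choose (k - 1)) *
          (1 - u) ^ (n - k - 1) * u ^ (k - 1) := by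
  obtain ⟨hu0, hus⟩ := hu
  set m : ℕ := n - k - 1 with hm
  have hm3 : 3 ≤ m := by omega
  have hmpos : (0:ℝ) < (m:ℝ) := by exact_mod_cast Nat.pos_of_ne_zero (by omega)
  have hsqrt : (1:ℝ) ≤ Real.sqrt (m:ℝ) := by
    rw [show (1:ℝ) = Real.sqrt 1 by simp]
    exact Real.sqrt_le_sqrt (by exact_mod_cast Nat.one_le_iff_ne_zero.mpr (by omega))
  have hs0 : 0 < s := lt_trans hu0 hus
  have hs2 : s ≤ 1/2 := by
    calc s ≤ 1 / (2 * Real.sqrt (m:ℝ)) := hs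
      _ ≤ 1/2 := by
        apply div_le_div_of_nonneg_left (by norm_num) (by norm_num) (by linarith)
  -- B ≥ 0
  have hBs : (m:ℝ) * s ^ 2 ≤ 1/4 := by
    have h1 : s ^ 2 ≤ (1 / (2 * Real.sqrt (m:ℝ))) ^ 2 := by
      apply sq_le_sq' _ hs; nlinarith
    have h2 : (1 / (2 * Real.sqrt (m:ℝ))) ^ 2 = 1 / (4 * m) := by
      rw [div_pow, mul_pow, Real.sq_sqrt (le_of_lt hmpos)]; norm_num
    rw [h2] at h1
    calc (m:ℝ) * s ^ 2 ≤ (m:ℝ) * (1 / (4*m)) := by nlinarith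
      _ = 1/4 := by field_simp
  have hB : 0 ≤ 1 - (m:ℝ) * s ^ 2 / (1 - s) := by
    have hs1 : (0:ℝ) < 1 - s := by linarith
    have : (m:ℝ) * s ^ 2 / (1 - s) ≤ (1/4) / (1/2) :=
      div_le_div₀ (by norm_num) hBs (by norm_num) (by linarith)
    linarith [this]
  -- exponential bound
  have hexp := aux_exp m s u hs2 hu0 hus
  -- nat combinatorics
  have hkn : k + 1 ≤ n := by omega
  have hdesc : n.descFactorial (k+1) = (n - k) * ((n - k + 1) * (Nat.factorial (k-1) * n.choose (k-1))) := by
    rw [Nat.descFactorial_succ, show k = (k-1) + 1 by omega, Nat.descFactorial_succ,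
      ← Nat.descFactorial_eq_factorial_mul_choose]
    congr 2 <;> omega
  have hlow : (n:ℝ) * (m:ℝ) ^ k ≤ (n.descFactorial (k+1) : ℝ) := by
    have := aux_desc k n hkn
    exact_mod_cast this
  -- main reduction
  have hfac : (0:ℝ) < (Nat.factorial (k-1) : ℝ) := by exact_mod_cast Nat.factorial_pos _
  rw [div_mul_eq_mul_div, div_mul_eq_mul_div, div_mul_eq_mul_div, div_mul_eq_mul_div,
    div_mul_eq_mul_div, div_le_iff₀ hfac]
  have hrhs : ((n - k + 1 : ℕ) : ℝ) * ((n - k : ℕ) : ℝ) * (n.choose (k - 1)) *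
      (1 - u) ^ m * u ^ (k - 1) * (Nat.factorial (k-1) : ℝ)
      = (n.descFactorial (k+1) : ℝ) * ((1 - u) ^ m * u ^ (k - 1)) := by
    rw [hdesc]; push_cast; ring
  rw [hrhs]
  have hpow : ((m:ℝ) * u) ^ (k-1) * (m:ℝ) = (m:ℝ) ^ k * u ^ (k-1) := by
    rw [mul_pow]
    have : (m:ℝ) ^ (k-1) * (m:ℝ) = (m:ℝ) ^ k := by
      rw [← pow_succ]; congr 1; omega
    calc (m:ℝ)^(k-1) * u^(k-1) * (m:ℝ) = ((m:ℝ)^(k-1) * (m:ℝ)) * u^(k-1) := by ring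
      _ = (m:ℝ)^k * u^(k-1) := by rw [this]
  have hA1 : (1 - 4 * (k : ℝ) ^ 2 / n) ≤ 1 := by
    have : (0:ℝ) ≤ 4 * (k:ℝ)^2 / n := by positivity
    linarith
  set A := (1 - 4 * (k : ℝ) ^ 2 / n) with hA
  set B := (1 - (m:ℝ) * s ^ 2 / (1 - s)) with hBdef
  set e := Real.exp (-((m:ℝ) * u)) with he
  have he0 : 0 ≤ e := Real.exp_nonneg _
  have hu0' : (0:ℝ) ≤ u ^ (k-1) := by positivity
  have hX : (0:ℝ) ≤ (n:ℝ) * (m:ℝ)^k * (B * e) * u ^ (k-1) := by positivity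
  have hstep : (n:ℝ) * (m:ℝ)^k * (B * e) ≤ (n.descFactorial (k+1) : ℝ) * (1-u)^m :=
    mul_le_mul hlow hexp (by positivity) (by positivity)
  calc (n:ℝ) * A * B * ((m:ℝ) * u) ^ (k-1) * e * (m:ℝ)
      = A * ((n:ℝ) * B * (((m:ℝ) * u) ^ (k-1) * (m:ℝ)) * e) := by ring
    _ = A * ((n:ℝ) * (m:ℝ)^k * (B * e) * u ^ (k-1)) := by rw [hpow]; ring
    _ ≤ 1 * ((n:ℝ) * (m:ℝ)^k * (B * e) * u ^ (k-1)) := mul_le_mul_of_nonneg_right hA1 hX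
    _ = ((n:ℝ) * (m:ℝ)^k * (B * e)) * u ^ (k-1) := by ring
    _ ≤ ((n.descFactorial (k+1) : ℝ) * (1-u)^m) * u ^ (k-1) :=
        mul_le_mul_of_nonneg_right hstep hu0'
    _ = (n.descFactorial (k+1) : ℝ) * ((1 - u) ^ m * u ^ (k - 1)) := by ring
end
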